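/- (Lemma 2.) Let Θ ⊆ ℝ be an interval, α ∈ (0, 1/2), and let F : ℝ → ℝ be differentiable, α-strongly convex on Θ, and 1-smooth (i.e., F' is 1-Lipschitz). Let F̃ : ℝ → ℝ be differentiable. If θ* ∈ Θ is a minimizer of F and θ̃* ∈ Θ is a minimizer of F̃, then |θ̃* − θ*| ≤ ((α + 1)/α) · sup_{θ ∈ ℝ} | F̃'(θ) − F'(θ) |. -/

import Mathlib

open MeasureTheory

/-- **Lemma 2.** If `F` is differentiable, `α`-strongly convex on an interval `Θ`
(`α ∈ (0, 1/2)`) and `1`-smooth (`F'` is `1`-Lipschitz), `F̃` is differentiable, and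
`θ* ∈ Θ`, `θ̃* ∈ Θ` are minimizers of `F` and `F̃` respectively, then
`|θ̃* − θ*| ≤ ((α+1)/α) · sup_θ |F̃'(θ) − F'(θ)|`. -/
theorem minimizer_perturbation_bound
    (Θ : Set ℝ) (hΘ : Convex ℝ Θ)
    (α : ℝ) (hα : α ∈ Set.Ioo (0 : ℝ) (1 / 2))
    (F Ftil : ℝ → ℝ) (F' Ftil' : ℝ → ℝ)
    (hF : ∀ θ, HasDerivAt F (F' θ) θ)
    (hFtil : ∀ θ, HasDerivAt Ftil (Ftil' θ) θ)
    (hconv : StrongConvexOn Θ α F)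
    (hsmooth : LipschitzWith 1 F')
    (θstar θtil : ℝ) (hθ : θstar ∈ Θ) (hθtil : θtil ∈ Θ)
    (hmin : ∀ x : ℝ, F θstar ≤ F x)
    (hmintil : ∀ x : ℝ, Ftil θtil ≤ Ftil x)
    (S : ℝ) (hS : ∀ θ : ℝ, |Ftil' θ - F' θ| ≤ S) :
    |θtil - θstar| ≤ (α + 1) / α * S := by
  obtain ⟨hα0, hα2⟩ := hα
  have hS0 : 0 ≤ S := le_trans (abs_nonneg _) (hS 0)
  -- derivative at minimizers is zero
  have hF0 : F' θstar = 0 :=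
    IsLocalMin.hasDerivAt_eq_zero (Filter.Eventually.of_forall hmin) (hF θstar)
  have hFtil0 : Ftil' θtil = 0 :=
    IsLocalMin.hasDerivAt_eq_zero (Filter.Eventually.of_forall hmintil) (hFtil θtil)
  have hFt : |F' θtil| ≤ S := by
    have := hS θtil
    rw [hFtil0, zero_sub, abs_neg] at this
    exact this
  -- convexity of g = F - α/2 x²
  set g : ℝ → ℝ := fun x => F x - α / 2 * x ^ 2 with hg
  have hgconv : ConvexOn ℝ Θ g := by
    have := (strongConvexOn_iff_convex).mp hconv
    simpa [Real.norm_eq_abs, sq_abs] using this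
  have hg' : ∀ x, HasDerivAt g (F' x - α * x) x := by
    intro x
    have h2 : HasDerivAt (fun x : ℝ => α / 2 * x ^ 2) (α / 2 * (2 * x)) x := by
      exact (hasDerivAt_pow 2 x).const_mul (α / 2) |>.congr_deriv (by ring)
    have := (hF x).sub h2
    exact this.congr_deriv (by ring)
  -- monotonicity of g' : key strong convexity inequality
  have key : ∀ x ∈ Θ, ∀ y ∈ Θ, x < y → α * (y - x) ≤ F' y - F' x := by
    intro x hx y hy hxy
    have h1 := hgconv.le_slope_of_hasDerivAt hx hy hxy (hg' x)
    have h2 := hgconv.slope_le_of_hasDerivAt hx hy hxy (hg' y)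
    have := h1.trans h2
    nlinarith
  have hdiv : S / α ≤ (α + 1) / α * S := by
    rw [div_mul_eq_mul_div, div_le_div_iff₀ hα0 hα0]
    have h0 : 0 ≤ α * S * α := by positivity
    nlinarith
  rcases lt_trichotomy θtil θstar with h | h | h
  · have hk := key θtil hθtil θstar hθ h
    rw [hF0] at hk
    have h1 : α * (θstar - θtil) ≤ S := by
      have : -F' θtil ≤ |F' θtil| := neg_le_abs _
      linarith
    rw [abs_of_neg (by linarith)]
    calc -(θtil - θstar) ≤ S / α := by
          rw [le_div_iff₀ hα0]; nlinarith
      _ ≤ (α + 1) / α * S := hdiv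
  · rw [h]; simp; positivity
  · have hk := key θstar hθ θtil hθtil h
    rw [hF0] at hk
    have h1 : α * (θtil - θstar) ≤ S := by
      have : F' θtil ≤ |F' θtil| := le_abs_self _
      linarith
    rw [abs_of_pos (by linarith)]
    calc θtil - θstar ≤ S / α := by
          rw [le_div_iff₀ hα0]; nlinarith
      _ ≤ (α + 1) / α * S := hdiv
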